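/- Assume the semigroup-type inequality (i), the on-diagonal bound (ii), and η > α/(βd), γ > 0. Then there exist δ₀ > 0 and C > 0 such that for every measurable V₀ : ℝ^d → [0,∞) with V₀(x) ≤ δ₀ · G(γ,x) for all x ∈ ℝ^d, there exists a measurable V : (0,∞) × ℝ^d → [0,∞) satisfying V(t,x) = ∫_{ℝ^d} G(t,x−y)V₀(y) dy + ∫₀^t ∫_{ℝ^d} G(t−s,x−y) V(s,y)^{1+η} dy ds for all t > 0, x ∈ ℝ^d, and such that V(t,x) ≤ C · G(t+γ, x) for all t > 0 and x ∈ ℝ^d. -/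

import Mathlib

open MeasureTheory ENNReal

private lemma my_iSup_rpow {c : ℝ} (hc : 0 < c) (f : ℕ → ℝ≥0∞) :
    (⨆ n, f n) ^ c = ⨆ n, f n ^ c := by
  refine le_antisymm ?_ (iSup_le fun n => ENNReal.rpow_le_rpow (le_iSup f n) hc.le)
  have h1 : (⨆ n, f n) ≤ (⨆ n, f n ^ c) ^ (1 / c) := by
    refine iSup_le fun n => ?_
    have h := ENNReal.rpow_le_rpow (le_iSup (fun n => f n ^ c) n)
      (by positivity : (0:ℝ) ≤ 1 / c)
    rwa [← ENNReal.rpow_mul, mul_one_div, div_self hc.ne', ENNReal.rpow_one] at h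
  calc (⨆ n, f n) ^ c ≤ ((⨆ n, f n ^ c) ^ (1 / c)) ^ c := ENNReal.rpow_le_rpow h1 hc.le
    _ = ⨆ n, f n ^ c := by
        rw [← ENNReal.rpow_mul, one_div_mul_cancel hc.ne', ENNReal.rpow_one]

set_option maxHeartbeats 2000000 in
theorem global_solution_comparison
    (d : ℕ) (hd : 1 ≤ d) (α β η γ : ℝ)
    (hα : α ∈ Set.Ioo (0 : ℝ) 2) (hβ : β ∈ Set.Ioo (0 : ℝ) 1)
    (hη : α / (β * d) < η) (hγ : 0 < γ)
    (G : ℝ → EuclideanSpace ℝ (Fin d) → ℝ)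
    (hGmeas : Measurable (Function.uncurry G))
    (hGpos : ∀ t : ℝ, 0 < t → ∀ x, 0 < G t x)
    (C₀ : ℝ) (hC₀ : 0 < C₀)
    (hGsemi : ∀ a b : ℝ, 0 < a → 0 < b → ∀ x : EuclideanSpace ℝ (Fin d),
      (∫⁻ y, ENNReal.ofReal (G a (x - y)) * ENNReal.ofReal (G b y))
        ≤ ENNReal.ofReal (C₀ * G (a + b) x))
    (c₂ : ℝ) (hc₂ : 0 < c₂)
    (hGdiag : ∀ t : ℝ, 0 < t → ∀ x : EuclideanSpace ℝ (Fin d),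
      G t x ≤ c₂ * t ^ (-(β * d) / α)) :
    ∃ δ₀ : ℝ, 0 < δ₀ ∧ ∃ C : ℝ, 0 < C ∧
      ∀ V₀ : EuclideanSpace ℝ (Fin d) → ℝ,
        Measurable V₀ → (∀ x, 0 ≤ V₀ x) → (∀ x, V₀ x ≤ δ₀ * G γ x) →
        ∃ V : ℝ → EuclideanSpace ℝ (Fin d) → ℝ,
          Measurable (Function.uncurry V) ∧ (∀ t x, 0 ≤ V t x) ∧
          (∀ t : ℝ, 0 < t → ∀ x : EuclideanSpace ℝ (Fin d),
            ENNReal.ofReal (V t x)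
              = (∫⁻ y, ENNReal.ofReal (G t (x - y)) * ENNReal.ofReal (V₀ y))
                + ∫⁻ s in Set.Ioo (0 : ℝ) t,
                    ∫⁻ y, ENNReal.ofReal (G (t - s) (x - y))
                      * ENNReal.ofReal (V s y) ^ (1 + η)) ∧
          (∀ t : ℝ, 0 < t → ∀ x : EuclideanSpace ℝ (Fin d),
            V t x ≤ C * G (t + γ) x) := by
  classical
  obtain ⟨hα0, hα2⟩ := hα
  obtain ⟨hβ0, hβ1⟩ := hβ
  have hd0 : (0:ℝ) < d := by
    have : (1:ℝ) ≤ (d:ℝ) := by exact_mod_cast hd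
    linarith
  have hβd : 0 < β * d := mul_pos hβ0 hd0
  have hη0 : 0 < η := lt_trans (div_pos hα0 hβd) hη
  have h1η : 0 < 1 + η := by linarith
  set κ : ℝ := η * (β * d / α) with hκdef
  have hκ : 1 < κ := by
    have h1 : α / (β * d) * (β * d / α) = 1 := by field_simp
    calc (1:ℝ) = α / (β * d) * (β * d / α) := h1.symm
      _ < η * (β * d / α) := mul_lt_mul_of_pos_right hη (div_pos hβd hα0)
  have hexp : -(β * d) / α * η = -κ := by rw [hκdef]; ring
  -- the time integral constant
  have hIfin : (∫⁻ s in Set.Ioi (0:ℝ), ENNReal.ofReal ((s + γ) ^ (-κ))) < ⊤ := by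
    have heq : (∫⁻ s in Set.Ioi (0:ℝ), ENNReal.ofReal ((s + γ) ^ (-κ)))
        = ∫⁻ u in Set.Ioi γ, ENNReal.ofReal (u ^ (-κ)) := by
      rw [← lintegral_indicator measurableSet_Ioi, ← lintegral_indicator measurableSet_Ioi]
      rw [← lintegral_add_right_eq_self
        (fun u => (Set.Ioi γ).indicator (fun u => ENNReal.ofReal (u ^ (-κ))) u) γ]
      refine lintegral_congr fun s => ?_
      by_cases hs : 0 < s
      · rw [Set.indicator_of_mem (Set.mem_Ioi.2 hs),
          Set.indicator_of_mem (Set.mem_Ioi.2 (by linarith))]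
      · rw [Set.indicator_of_notMem (by simpa using hs),
          Set.indicator_of_notMem (by simp; linarith)]
    rw [heq]
    exact (integrableOn_Ioi_rpow_of_lt (by linarith) hγ).setLIntegral_lt_top
  set Ir : ℝ := (∫⁻ s in Set.Ioi (0:ℝ), ENNReal.ofReal ((s + γ) ^ (-κ))).toReal with hIrdef
  have hIr0 : 0 ≤ Ir := ENNReal.toReal_nonneg
  have hIbound : ∀ t : ℝ, (∫⁻ s in Set.Ioo (0:ℝ) t, ENNReal.ofReal ((s + γ) ^ (-κ)))
      ≤ ENNReal.ofReal Ir := by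
    intro t
    have h1 : (∫⁻ s in Set.Ioo (0:ℝ) t, ENNReal.ofReal ((s + γ) ^ (-κ)))
        ≤ ∫⁻ s in Set.Ioi (0:ℝ), ENNReal.ofReal ((s + γ) ^ (-κ)) :=
      lintegral_mono' (Measure.restrict_mono Set.Ioo_subset_Ioi_self le_rfl) le_rfl
    rwa [← ENNReal.ofReal_toReal hIfin.ne] at h1
  -- constants
  set E : ℝ := 2 ^ (1 + η) * C₀ ^ η * c₂ ^ η with hE
  have hEpos : 0 < E := by positivity
  set B : ℝ := E * C₀ * (Ir + 1) with hB
  have hBpos : 0 < B := by positivity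
  set δ₀ : ℝ := (1 / B) ^ (1 / η) with hδ₀def
  have hδ₀ : 0 < δ₀ := Real.rpow_pos_of_pos (by positivity) _
  have hδη : δ₀ ^ η = 1 / B := by
    rw [hδ₀def, ← Real.rpow_mul (by positivity), one_div_mul_cancel hη0.ne', Real.rpow_one]
  set C : ℝ := 2 * C₀ * δ₀ with hC
  have hCpos : 0 < C := by positivity
  -- key numeric inequality
  have hkey : δ₀ * C₀ + C ^ (1 + η) * c₂ ^ η * C₀ * Ir ≤ C := by
    have e1 : C ^ (1 + η) = 2 ^ (1 + η) * C₀ ^ (1 + η) * δ₀ ^ (1 + η) := by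
      rw [hC, mul_assoc, Real.mul_rpow (by positivity) (by positivity),
        Real.mul_rpow hC₀.le hδ₀.le]
      ring
    have e2 : δ₀ ^ (1 + η) = δ₀ * (1 / B) := by
      rw [Real.rpow_add hδ₀, Real.rpow_one, hδη]
    have e3 : C₀ ^ (1 + η) = C₀ * C₀ ^ η := by
      rw [Real.rpow_add hC₀, Real.rpow_one]
    have e4 : C ^ (1 + η) * c₂ ^ η * C₀ * Ir = C₀ * δ₀ * (E * C₀ * Ir / B) := by
      rw [e1, e2, e3, hE]; field_simp
    have e5 : E * C₀ * Ir / B ≤ 1 := by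
      rw [div_le_one hBpos, hB]
      nlinarith [mul_pos hEpos hC₀]
    have e6 : C₀ * δ₀ * (E * C₀ * Ir / B) ≤ C₀ * δ₀ := by
      nlinarith [mul_pos hC₀ hδ₀, div_nonneg (by positivity : (0:ℝ) ≤ E * C₀ * Ir) hBpos.le]
    rw [e4, hC]; nlinarith
  refine ⟨δ₀, hδ₀, C, hCpos, ?_⟩
  intro V₀ hV₀m hV₀0 hV₀le
  -- abbreviations
  set g : ℝ → EuclideanSpace ℝ (Fin d) → ℝ≥0∞ := fun t x => ENNReal.ofReal (G t x) with hg
  have hgmeas : Measurable (Function.uncurry g) := ENNReal.measurable_ofReal.comp hGmeas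
  have hgfin : ∀ a b, g a b ≠ ⊤ := fun a b => ENNReal.ofReal_ne_top
  set W0 : ℝ → EuclideanSpace ℝ (Fin d) → ℝ≥0∞ :=
    fun t x => ∫⁻ y, g t (x - y) * ENNReal.ofReal (V₀ y) with hW0
  have hW0meas : Measurable (fun p : ℝ × EuclideanSpace ℝ (Fin d) => W0 p.1 p.2) := by
    apply Measurable.lintegral_prod_right'
      (f := fun q : (ℝ × EuclideanSpace ℝ (Fin d)) × EuclideanSpace ℝ (Fin d) =>
        g q.1.1 (q.1.2 - q.2) * ENNReal.ofReal (V₀ q.2))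
    exact (hgmeas.comp ((measurable_fst.comp measurable_fst).prodMk
      ((measurable_snd.comp measurable_fst).sub measurable_snd))).mul
      (ENNReal.measurable_ofReal.comp (hV₀m.comp measurable_snd))
  -- the Picard operator
  set Φ : (ℝ → EuclideanSpace ℝ (Fin d) → ℝ≥0∞) → (ℝ → EuclideanSpace ℝ (Fin d) → ℝ≥0∞) :=
    fun W t x =>
      W0 t x + ∫⁻ s in Set.Ioo 0 t, ∫⁻ y, g (t - s) (x - y) * (W s y) ^ (1 + η) with hΦ
  -- measurability of the nonlinear part
  have hNmeas : ∀ W : ℝ → EuclideanSpace ℝ (Fin d) → ℝ≥0∞, Measurable (Function.uncurry W) →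
      Measurable (fun p : ℝ × EuclideanSpace ℝ (Fin d) =>
        ∫⁻ s in Set.Ioo 0 p.1, ∫⁻ y, g (p.1 - s) (p.2 - y) * (W s y) ^ (1 + η)) := by
    intro W hW
    have hinner : Measurable (fun q : (ℝ × EuclideanSpace ℝ (Fin d)) × ℝ =>
        ∫⁻ y, g (q.1.1 - q.2) (q.1.2 - y) * (W q.2 y) ^ (1 + η)) := by
      apply Measurable.lintegral_prod_right'
        (f := fun r : ((ℝ × EuclideanSpace ℝ (Fin d)) × ℝ) × EuclideanSpace ℝ (Fin d) =>
          g (r.1.1.1 - r.1.2) (r.1.1.2 - r.2) * (W r.1.2 r.2) ^ (1 + η))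
      refine Measurable.mul ?_ ?_
      · exact hgmeas.comp
          (((measurable_fst.comp (measurable_fst.comp measurable_fst)).sub
            (measurable_snd.comp measurable_fst)).prodMk
            ((measurable_snd.comp (measurable_fst.comp measurable_fst)).sub measurable_snd))
      · exact (hW.comp ((measurable_snd.comp measurable_fst).prodMk
          measurable_snd)).pow_const _
    have hset : MeasurableSet {q : (ℝ × EuclideanSpace ℝ (Fin d)) × ℝ | q.2 ∈ Set.Ioo 0 q.1.1} := by
      apply MeasurableSet.inter
      · exact measurableSet_lt measurable_const measurable_snd
      · exact measurableSet_lt measurable_snd (measurable_fst.comp measurable_fst)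
    have hind : Measurable (fun q : (ℝ × EuclideanSpace ℝ (Fin d)) × ℝ =>
        Set.indicator {q : (ℝ × EuclideanSpace ℝ (Fin d)) × ℝ | q.2 ∈ Set.Ioo 0 q.1.1}
          (fun q => ∫⁻ y, g (q.1.1 - q.2) (q.1.2 - y) * (W q.2 y) ^ (1 + η)) q) :=
      hinner.indicator hset
    have key : (fun p : ℝ × EuclideanSpace ℝ (Fin d) =>
          ∫⁻ s in Set.Ioo 0 p.1, ∫⁻ y, g (p.1 - s) (p.2 - y) * (W s y) ^ (1 + η))
        = fun p : ℝ × EuclideanSpace ℝ (Fin d) => ∫⁻ s,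
            Set.indicator {q : (ℝ × EuclideanSpace ℝ (Fin d)) × ℝ | q.2 ∈ Set.Ioo 0 q.1.1}
              (fun q => ∫⁻ y, g (q.1.1 - q.2) (q.1.2 - y) * (W q.2 y) ^ (1 + η)) (p, s) := by
      funext p
      rw [← lintegral_indicator measurableSet_Ioo]
      refine lintegral_congr fun s => ?_
      simp only [Set.indicator_apply, Set.mem_setOf_eq]
    rw [key]
    exact Measurable.lintegral_prod_right' hind
  -- Picard iterates
  set Wseq : ℕ → ℝ → EuclideanSpace ℝ (Fin d) → ℝ≥0∞ :=
    fun n => Φ^[n] (fun _ _ => 0) with hWseq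
  have hWsucc : ∀ n, Wseq (n + 1) = Φ (Wseq n) := fun n =>
    Function.iterate_succ_apply' Φ n _
  have hWmeas : ∀ n, Measurable (fun p : ℝ × EuclideanSpace ℝ (Fin d) => Wseq n p.1 p.2) := by
    intro n
    induction n with
    | zero =>
      have : (fun p : ℝ × EuclideanSpace ℝ (Fin d) => Wseq 0 p.1 p.2)
          = fun _ => (0 : ℝ≥0∞) := rfl
      rw [this]; exact measurable_const
    | succ n ih =>
      have : (fun p : ℝ × EuclideanSpace ℝ (Fin d) => Wseq (n + 1) p.1 p.2)
          = fun p => W0 p.1 p.2 +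
            ∫⁻ s in Set.Ioo 0 p.1, ∫⁻ y, g (p.1 - s) (p.2 - y) * (Wseq n s y) ^ (1 + η) := by
        funext p; rw [hWsucc n]
      rw [this]
      exact hW0meas.add (hNmeas (Wseq n) ih)
  -- monotonicity
  have hΦmono : ∀ W W' : ℝ → EuclideanSpace ℝ (Fin d) → ℝ≥0∞,
      (∀ t x, W t x ≤ W' t x) → ∀ t x, Φ W t x ≤ Φ W' t x := by
    intro W W' hle t x
    exact add_le_add le_rfl (lintegral_mono fun s => lintegral_mono fun y =>
      mul_le_mul' le_rfl (ENNReal.rpow_le_rpow (hle s y) h1η.le))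
  have hstep : ∀ n t x, Wseq n t x ≤ Wseq (n + 1) t x := by
    intro n
    induction n with
    | zero => intro t x; exact zero_le
    | succ n ih =>
      intro t x
      have h := hΦmono _ _ ih t x
      rwa [← hWsucc n, ← hWsucc (n + 1)] at h
  have hseqmono : ∀ m n, m ≤ n → ∀ t x, Wseq m t x ≤ Wseq n t x := by
    intro m n hmn
    induction n with
    | zero => intro t x; rw [Nat.le_zero.mp hmn]
    | succ n ih =>
      rcases Nat.lt_or_ge m (n + 1) with h | h
      · intro t x
        exact le_trans (ih (Nat.lt_succ_iff.mp h) t x) (hstep n t x)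
      · intro t x; rw [Nat.le_antisymm hmn h]
  -- uniform bound on the iterates
  have hbnd : ∀ n, ∀ t : ℝ, 0 < t → ∀ x, Wseq n t x ≤ ENNReal.ofReal C * g (t + γ) x := by
    intro n
    induction n with
    | zero => intro t ht x; exact zero_le
    | succ n ih =>
      intro t ht x
      rw [hWsucc n]
      have htγ : 0 < t + γ := by linarith
      have hlin : W0 t x ≤ ENNReal.ofReal (δ₀ * C₀) * g (t + γ) x := by
        have h1 : W0 t x ≤ ∫⁻ y, ENNReal.ofReal δ₀ * (g t (x - y) * g γ y) := by
          refine lintegral_mono fun y => ?_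
          have h2 : ENNReal.ofReal (V₀ y) ≤ ENNReal.ofReal δ₀ * g γ y := by
            rw [hg, ← ENNReal.ofReal_mul hδ₀.le]
            exact ENNReal.ofReal_le_ofReal (hV₀le y)
          calc g t (x - y) * ENNReal.ofReal (V₀ y)
              ≤ g t (x - y) * (ENNReal.ofReal δ₀ * g γ y) := mul_le_mul' le_rfl h2
            _ = ENNReal.ofReal δ₀ * (g t (x - y) * g γ y) := by ring
        rw [lintegral_const_mul' _ _ ENNReal.ofReal_ne_top] at h1
        calc W0 t x ≤ ENNReal.ofReal δ₀ * ∫⁻ y, g t (x - y) * g γ y := h1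
          _ ≤ ENNReal.ofReal δ₀ * ENNReal.ofReal (C₀ * G (t + γ) x) :=
              mul_le_mul' le_rfl (hGsemi t γ ht hγ x)
          _ = ENNReal.ofReal (δ₀ * C₀) * g (t + γ) x := by
              rw [hg, ← ENNReal.ofReal_mul hδ₀.le, ← ENNReal.ofReal_mul (by positivity),
                mul_assoc]
      have hnl : (∫⁻ s in Set.Ioo 0 t, ∫⁻ y, g (t - s) (x - y) * (Wseq n s y) ^ (1 + η))
          ≤ ENNReal.ofReal (C ^ (1 + η) * c₂ ^ η * C₀ * Ir) * g (t + γ) x := by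
        have hpt : ∀ s ∈ Set.Ioo (0:ℝ) t,
            (∫⁻ y, g (t - s) (x - y) * (Wseq n s y) ^ (1 + η))
              ≤ ENNReal.ofReal (C ^ (1 + η) * c₂ ^ η * C₀ * G (t + γ) x)
                  * ENNReal.ofReal ((s + γ) ^ (-κ)) := by
          intro s hs
          obtain ⟨hs0, hst⟩ := hs
          have hsγ : 0 < s + γ := by linarith
          have hts : 0 < t - s := by linarith
          have hsγκ : (0:ℝ) ≤ (s + γ) ^ (-κ) := Real.rpow_nonneg hsγ.le _
          have hGtγ0 : (0:ℝ) ≤ G (t + γ) x := (hGpos _ htγ x).le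
          have hGsγpos : ∀ y, 0 < G (s + γ) y := hGpos _ hsγ
          have hrpow : ∀ y : EuclideanSpace ℝ (Fin d), (Wseq n s y) ^ (1 + η)
              ≤ ENNReal.ofReal (C ^ (1 + η) * (c₂ ^ η * (s + γ) ^ (-κ))) * g (s + γ) y := by
            intro y
            have h1 : (Wseq n s y) ^ (1 + η) ≤ (ENNReal.ofReal C * g (s + γ) y) ^ (1 + η) :=
              ENNReal.rpow_le_rpow (ih s hs0 y) h1η.le
            have h2 : (ENNReal.ofReal C * g (s + γ) y) ^ (1 + η)
                = ENNReal.ofReal (C ^ (1 + η)) * ((g (s + γ) y) ^ η * g (s + γ) y) := by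
              rw [ENNReal.mul_rpow_of_nonneg _ _ h1η.le, ENNReal.ofReal_rpow_of_pos hCpos]
              congr 1
              rw [show (1 : ℝ) + η = η + 1 by ring,
                ENNReal.rpow_add _ _ (by simp [hg, (hGsγpos y)] : g (s + γ) y ≠ 0)
                  (hgfin _ _), ENNReal.rpow_one]
            have h3 : (g (s + γ) y) ^ η ≤ ENNReal.ofReal (c₂ ^ η * (s + γ) ^ (-κ)) := by
              have h4 : g (s + γ) y ≤ ENNReal.ofReal (c₂ * (s + γ) ^ (-(β * ↑d) / α)) :=
                ENNReal.ofReal_le_ofReal (hGdiag _ hsγ y)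
              have h5 := ENNReal.rpow_le_rpow h4 hη0.le
              rwa [ENNReal.ofReal_rpow_of_pos (mul_pos hc₂ (Real.rpow_pos_of_pos hsγ _)),
                Real.mul_rpow hc₂.le (Real.rpow_nonneg hsγ.le _),
                ← Real.rpow_mul hsγ.le, hexp] at h5
            calc (Wseq n s y) ^ (1 + η)
                ≤ ENNReal.ofReal (C ^ (1 + η)) * ((g (s + γ) y) ^ η * g (s + γ) y) :=
                  h1.trans_eq h2
              _ ≤ ENNReal.ofReal (C ^ (1 + η)) *
                    (ENNReal.ofReal (c₂ ^ η * (s + γ) ^ (-κ)) * g (s + γ) y) :=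
                  mul_le_mul' le_rfl (mul_le_mul' h3 le_rfl)
              _ = ENNReal.ofReal (C ^ (1 + η) * (c₂ ^ η * (s + γ) ^ (-κ))) * g (s + γ) y := by
                  rw [← mul_assoc, ← ENNReal.ofReal_mul (by positivity : (0:ℝ) ≤ C ^ (1 + η))]
          have h6 : (∫⁻ y, g (t - s) (x - y) * (Wseq n s y) ^ (1 + η))
              ≤ ENNReal.ofReal (C ^ (1 + η) * (c₂ ^ η * (s + γ) ^ (-κ)))
                  * ∫⁻ y, g (t - s) (x - y) * g (s + γ) y := by
            rw [← lintegral_const_mul' _ _ ENNReal.ofReal_ne_top]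
            refine lintegral_mono fun y => ?_
            calc g (t - s) (x - y) * (Wseq n s y) ^ (1 + η)
                ≤ g (t - s) (x - y) *
                    (ENNReal.ofReal (C ^ (1 + η) * (c₂ ^ η * (s + γ) ^ (-κ))) * g (s + γ) y) :=
                  mul_le_mul' le_rfl (hrpow y)
              _ = ENNReal.ofReal (C ^ (1 + η) * (c₂ ^ η * (s + γ) ^ (-κ)))
                    * (g (t - s) (x - y) * g (s + γ) y) := by ring
          have h7 : (∫⁻ y, g (t - s) (x - y) * g (s + γ) y)
              ≤ ENNReal.ofReal (C₀ * G (t + γ) x) := by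
            have := hGsemi (t - s) (s + γ) hts hsγ x
            rwa [show t - s + (s + γ) = t + γ by ring] at this
          calc (∫⁻ y, g (t - s) (x - y) * (Wseq n s y) ^ (1 + η))
              ≤ ENNReal.ofReal (C ^ (1 + η) * (c₂ ^ η * (s + γ) ^ (-κ)))
                  * ENNReal.ofReal (C₀ * G (t + γ) x) :=
                h6.trans (mul_le_mul' le_rfl h7)
            _ = ENNReal.ofReal (C ^ (1 + η) * c₂ ^ η * C₀ * G (t + γ) x)
                  * ENNReal.ofReal ((s + γ) ^ (-κ)) := by
                rw [← ENNReal.ofReal_mul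
                    (mul_nonneg (by positivity : (0:ℝ) ≤ C ^ (1 + η))
                      (mul_nonneg (by positivity : (0:ℝ) ≤ c₂ ^ η) hsγκ)),
                  ← ENNReal.ofReal_mul
                    (mul_nonneg (mul_nonneg
                      (mul_nonneg (by positivity : (0:ℝ) ≤ C ^ (1 + η))
                        (by positivity : (0:ℝ) ≤ c₂ ^ η)) hC₀.le) hGtγ0)]
                congr 1
                ring
        calc (∫⁻ s in Set.Ioo 0 t, ∫⁻ y, g (t - s) (x - y) * (Wseq n s y) ^ (1 + η))
            ≤ ∫⁻ s in Set.Ioo 0 t, ENNReal.ofReal (C ^ (1 + η) * c₂ ^ η * C₀ * G (t + γ) x)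
                * ENNReal.ofReal ((s + γ) ^ (-κ)) :=
              setLIntegral_mono' measurableSet_Ioo hpt
          _ = ENNReal.ofReal (C ^ (1 + η) * c₂ ^ η * C₀ * G (t + γ) x)
                * ∫⁻ s in Set.Ioo 0 t, ENNReal.ofReal ((s + γ) ^ (-κ)) :=
              lintegral_const_mul' _ _ ENNReal.ofReal_ne_top
          _ ≤ ENNReal.ofReal (C ^ (1 + η) * c₂ ^ η * C₀ * G (t + γ) x)
                * ENNReal.ofReal Ir := mul_le_mul' le_rfl (hIbound t)
          _ = ENNReal.ofReal (C ^ (1 + η) * c₂ ^ η * C₀ * Ir) * g (t + γ) x := by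
              rw [hg, ← ENNReal.ofReal_mul
                  (mul_nonneg (mul_nonneg
                    (mul_nonneg (by positivity : (0:ℝ) ≤ C ^ (1 + η))
                      (by positivity : (0:ℝ) ≤ c₂ ^ η)) hC₀.le) (hGpos _ htγ x).le),
                ← ENNReal.ofReal_mul
                  (mul_nonneg (mul_nonneg
                    (mul_nonneg (by positivity : (0:ℝ) ≤ C ^ (1 + η))
                      (by positivity : (0:ℝ) ≤ c₂ ^ η)) hC₀.le) hIr0)]
              congr 1
              ring
      calc Φ (Wseq n) t x
          = W0 t x + ∫⁻ s in Set.Ioo 0 t, ∫⁻ y, g (t - s) (x - y) * (Wseq n s y) ^ (1 + η) :=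
            rfl
        _ ≤ ENNReal.ofReal (δ₀ * C₀) * g (t + γ) x
              + ENNReal.ofReal (C ^ (1 + η) * c₂ ^ η * C₀ * Ir) * g (t + γ) x :=
            add_le_add hlin hnl
        _ = ENNReal.ofReal (δ₀ * C₀ + C ^ (1 + η) * c₂ ^ η * C₀ * Ir) * g (t + γ) x := by
            rw [← add_mul, ← ENNReal.ofReal_add (by positivity)
              (mul_nonneg (mul_nonneg
                (mul_nonneg (by positivity : (0:ℝ) ≤ C ^ (1 + η))
                  (by positivity : (0:ℝ) ≤ c₂ ^ η)) hC₀.le) hIr0)]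
        _ ≤ ENNReal.ofReal C * g (t + γ) x :=
            mul_le_mul' (ENNReal.ofReal_le_ofReal hkey) le_rfl
  -- the limit
  set Wlim : ℝ → EuclideanSpace ℝ (Fin d) → ℝ≥0∞ := fun t x => ⨆ n, Wseq n t x with hWlim
  have hWlimmeas : Measurable (fun p : ℝ × EuclideanSpace ℝ (Fin d) => Wlim p.1 p.2) :=
    Measurable.iSup fun n => hWmeas n
  have hWlimbnd : ∀ t, 0 < t → ∀ x, Wlim t x ≤ ENNReal.ofReal C * g (t + γ) x :=
    fun t ht x => iSup_le fun n => hbnd n t ht x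
  have hWlimfin : ∀ t, 0 < t → ∀ x, Wlim t x ≠ ⊤ := fun t ht x =>
    ((hWlimbnd t ht x).trans_lt
      (ENNReal.mul_lt_top ENNReal.ofReal_lt_top ENNReal.ofReal_lt_top)).ne
  -- fixed point property
  have hfix : ∀ t x, Wlim t x = Φ Wlim t x := by
    intro t x
    have hmono_y : ∀ s : ℝ, Monotone
        (fun n => fun y => g (t - s) (x - y) * (Wseq n s y) ^ (1 + η)) :=
      fun s m n hmn y =>
        mul_le_mul' le_rfl (ENNReal.rpow_le_rpow (hseqmono m n hmn s y) h1η.le)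
    have hmeas_y : ∀ (s : ℝ) n,
        Measurable (fun y => g (t - s) (x - y) * (Wseq n s y) ^ (1 + η)) := by
      intro s n
      refine Measurable.mul ?_ ?_
      · exact hgmeas.comp (measurable_const.prodMk (measurable_const.sub measurable_id))
      · exact ((hWmeas n).comp (measurable_const.prodMk measurable_id)).pow_const _
    have hA : ∀ s : ℝ, (∫⁻ y, g (t - s) (x - y) * (Wlim s y) ^ (1 + η))
        = ⨆ n, ∫⁻ y, g (t - s) (x - y) * (Wseq n s y) ^ (1 + η) := by
      intro s
      rw [← lintegral_iSup (hmeas_y s) (hmono_y s)]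
      refine lintegral_congr fun y => ?_
      rw [show Wlim s y = ⨆ n, Wseq n s y from rfl,
        my_iSup_rpow h1η (fun n => Wseq n s y), ENNReal.mul_iSup]
    have hmeas_s : ∀ n, Measurable
        (fun s => ∫⁻ y, g (t - s) (x - y) * (Wseq n s y) ^ (1 + η)) := by
      intro n
      apply Measurable.lintegral_prod_right'
        (f := fun q : ℝ × EuclideanSpace ℝ (Fin d) =>
          g (t - q.1) (x - q.2) * (Wseq n q.1 q.2) ^ (1 + η))
      refine Measurable.mul ?_ ?_
      · exact hgmeas.comp ((measurable_const.sub measurable_fst).prodMk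
          (measurable_const.sub measurable_snd))
      · exact ((hWmeas n).comp (measurable_fst.prodMk measurable_snd)).pow_const _
    have hmono_s : Monotone
        (fun n => fun s => ∫⁻ y, g (t - s) (x - y) * (Wseq n s y) ^ (1 + η)) :=
      fun m n hmn s => lintegral_mono fun y => hmono_y s hmn y
    have hB2 : (∫⁻ s in Set.Ioo 0 t, ∫⁻ y, g (t - s) (x - y) * (Wlim s y) ^ (1 + η))
        = ⨆ n, ∫⁻ s in Set.Ioo 0 t, ∫⁻ y, g (t - s) (x - y) * (Wseq n s y) ^ (1 + η) := by
      calc (∫⁻ s in Set.Ioo 0 t, ∫⁻ y, g (t - s) (x - y) * (Wlim s y) ^ (1 + η))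
          = ∫⁻ s in Set.Ioo 0 t,
              ⨆ n, ∫⁻ y, g (t - s) (x - y) * (Wseq n s y) ^ (1 + η) :=
            lintegral_congr fun s => hA s
        _ = ⨆ n, ∫⁻ s in Set.Ioo 0 t, ∫⁻ y, g (t - s) (x - y) * (Wseq n s y) ^ (1 + η) :=
            lintegral_iSup (fun n => hmeas_s n) hmono_s
    have hΦeq : Φ Wlim t x
        = ⨆ n, (W0 t x + ∫⁻ s in Set.Ioo 0 t,
            ∫⁻ y, g (t - s) (x - y) * (Wseq n s y) ^ (1 + η)) := by
      rw [show Φ Wlim t x = W0 t x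
          + ∫⁻ s in Set.Ioo 0 t, ∫⁻ y, g (t - s) (x - y) * (Wlim s y) ^ (1 + η) from rfl,
        hB2, ENNReal.add_iSup]
    rw [hΦeq]
    refine le_antisymm (iSup_le fun n => ?_) (iSup_le fun n => ?_)
    · calc Wseq n t x ≤ Wseq (n + 1) t x := hstep n t x
        _ = W0 t x + ∫⁻ s in Set.Ioo 0 t,
              ∫⁻ y, g (t - s) (x - y) * (Wseq n s y) ^ (1 + η) := by rw [hWsucc n]
        _ ≤ ⨆ n, (W0 t x + ∫⁻ s in Set.Ioo 0 t,
              ∫⁻ y, g (t - s) (x - y) * (Wseq n s y) ^ (1 + η)) :=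
            le_iSup (fun n => W0 t x + ∫⁻ s in Set.Ioo 0 t,
              ∫⁻ y, g (t - s) (x - y) * (Wseq n s y) ^ (1 + η)) n
    · calc W0 t x + ∫⁻ s in Set.Ioo 0 t,
              ∫⁻ y, g (t - s) (x - y) * (Wseq n s y) ^ (1 + η)
          = Wseq (n + 1) t x := by rw [hWsucc n]
        _ ≤ Wlim t x := le_iSup (fun k => Wseq k t x) (n + 1)
  -- the solution
  refine ⟨fun t x => (Wlim t x).toReal, ?_, fun t x => ENNReal.toReal_nonneg, ?_, ?_⟩
  · exact ENNReal.measurable_toReal.comp hWlimmeas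
  · intro t ht x
    rw [ENNReal.ofReal_toReal (hWlimfin t ht x), hfix t x]
    rw [show Φ Wlim t x = W0 t x
        + ∫⁻ s in Set.Ioo 0 t, ∫⁻ y, g (t - s) (x - y) * (Wlim s y) ^ (1 + η) from rfl]
    congr 1
    refine setLIntegral_congr_fun measurableSet_Ioo (fun s hs => ?_)
    refine lintegral_congr fun y => ?_
    rw [ENNReal.ofReal_toReal (hWlimfin s hs.1 y)]
  · intro t ht x
    have h1 := hWlimbnd t ht x
    have h2 : (ENNReal.ofReal C * g (t + γ) x).toReal = C * G (t + γ) x := by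
      rw [hg, ← ENNReal.ofReal_mul hCpos.le,
        ENNReal.toReal_ofReal (mul_nonneg hCpos.le (hGpos _ (by linarith) x).le)]
    calc (Wlim t x).toReal
        ≤ (ENNReal.ofReal C * g (t + γ) x).toReal :=
          ENNReal.toReal_mono (ENNReal.mul_ne_top ENNReal.ofReal_ne_top ENNReal.ofReal_ne_top) h1
      _ = C * G (t + γ) x := h2
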